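/- Let k = F_{q^n} and let R = k{τ} be the twisted polynomial ring with commutation rule τa = a^q τ for a ∈ k. Let P ∈ R be monic irreducible of degree s. Then the set S = {f ∈ R : deg f ≤ s−1}, with addition from R and multiplication a ∘ b = (ab mod_r P) (the remainder upon right division by P), is a semifield of order q^{ns}. -/

import Mathlib

/-- The twisted polynomial ring `R = k{τ}` over `k = F_{q^n}`, with commutation
rule `τ a = a^q τ`, axiomatized: `R` is a ring, free as a left `k`-module with
basis `1, τ, τ², …`. -/
structure TwistedPolynomialRing (q : ℕ) (k : Type) [Field k] (R : Type) [Ring R] [Module k R] where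
  ι : k →+* R
  τ : R
  tau_comm : ∀ a : k, τ * ι a = ι (a ^ q) * τ
  smul_def : ∀ (a : k) (r : R), a • r = ι a * r
  basis : Module.Basis ℕ k R
  basis_eq : ∀ i : ℕ, basis i = τ ^ i

variable {q : ℕ} {k R : Type} [Field k] [Ring R] [Module k R]

/-- The τ-degree of a twisted polynomial (`0` for the zero polynomial). -/
noncomputable def TwistedPolynomialRing.degτ (T : TwistedPolynomialRing q k R) (f : R) : ℕ :=
  (T.basis.repr f).support.sup id

namespace TwistedAux

lemma eq_zero_of_repr (T : TwistedPolynomialRing q k R) {x : R} (h : T.basis.repr x = 0) :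
    x = 0 := by
  have := congrArg T.basis.repr.symm h
  simpa using this

lemma repr_ne_zero (T : TwistedPolynomialRing q k R) {x : R} (hx : x ≠ 0) :
    T.basis.repr x ≠ 0 :=
  fun h => hx (eq_zero_of_repr T h)

lemma le_degτ (T : TwistedPolynomialRing q k R) {x : R} {i : ℕ}
    (h : i ∈ (T.basis.repr x).support) : i ≤ T.degτ x :=
  Finset.le_sup (f := id) h

lemma degτ_mem (T : TwistedPolynomialRing q k R) {x : R} (hx : x ≠ 0) :
    T.degτ x ∈ (T.basis.repr x).support := by
  obtain ⟨i, hi, hsup⟩ := Finset.exists_mem_eq_sup (T.basis.repr x).support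
    (Finsupp.support_nonempty_iff.mpr (repr_ne_zero T hx)) id
  simpa [TwistedPolynomialRing.degτ, hsup] using hi

lemma lead_ne_zero (T : TwistedPolynomialRing q k R) {x : R} (hx : x ≠ 0) :
    T.basis.repr x (T.degτ x) ≠ 0 :=
  Finsupp.mem_support_iff.mp (degτ_mem T hx)

lemma repr_eq_zero_of_lt (T : TwistedPolynomialRing q k R) {x : R} {m : ℕ}
    (h : T.degτ x < m) : T.basis.repr x m = 0 := by
  by_contra hm
  exact absurd (le_degτ T (Finsupp.mem_support_iff.mpr hm)) (not_le.mpr h)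

/-- Characterization of "degree below N". -/
lemma below_iff (T : TwistedPolynomialRing q k R) (N : ℕ) (f : R) :
    (f = 0 ∨ T.degτ f < N) ↔ ∀ m, N ≤ m → T.basis.repr f m = 0 := by
  constructor
  · rintro (rfl | h) m hm
    · simp
    · exact repr_eq_zero_of_lt T (lt_of_lt_of_le h hm)
  · intro h
    rcases eq_or_ne f 0 with rfl | hf
    · exact Or.inl rfl
    · right
      rcases Nat.eq_zero_or_pos N with rfl | hN
      · exact absurd (eq_zero_of_repr T (Finsupp.ext fun m => h m (Nat.zero_le m))) hf
      · refine (Finset.sup_lt_iff hN).mpr fun b hb => ?_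
        by_contra hbN
        exact Finsupp.mem_support_iff.mp hb (h b (not_lt.mp hbN))

lemma tau_pow_comm (T : TwistedPolynomialRing q k R) (i : ℕ) :
    ∀ a : k, T.τ ^ i * T.ι a = T.ι (a ^ q ^ i) * T.τ ^ i := by
  induction i with
  | zero => intro a; simp
  | succ i ih =>
    intro a
    have hsc : (a ^ q) ^ q ^ i = a ^ q ^ (i + 1) := by rw [← pow_mul, ← pow_succ']
    calc T.τ ^ (i + 1) * T.ι a = T.τ ^ i * (T.τ * T.ι a) := by rw [pow_succ, mul_assoc]
      _ = T.τ ^ i * (T.ι (a ^ q) * T.τ) := by rw [T.tau_comm]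
      _ = (T.τ ^ i * T.ι (a ^ q)) * T.τ := by rw [mul_assoc]
      _ = (T.ι ((a ^ q) ^ q ^ i) * T.τ ^ i) * T.τ := by rw [ih]
      _ = T.ι (a ^ q ^ (i + 1)) * T.τ ^ (i + 1) := by rw [hsc, mul_assoc, ← pow_succ]

lemma smul_tau_mul (T : TwistedPolynomialRing q k R) (a b : k) (i j : ℕ) :
    (a • T.τ ^ i) * (b • T.τ ^ j) = (a * b ^ q ^ i) • T.τ ^ (i + j) := by
  rw [T.smul_def, T.smul_def, T.smul_def, map_mul, pow_add,
    mul_assoc (T.ι a), ← mul_assoc (T.τ ^ i), tau_pow_comm,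
    mul_assoc (T.ι (b ^ q ^ i)), ← mul_assoc]

lemma mul_expand (T : TwistedPolynomialRing q k R) (x y : R) :
    x * y = ∑ i ∈ (T.basis.repr x).support, ∑ j ∈ (T.basis.repr y).support,
      (T.basis.repr x i * (T.basis.repr y j) ^ q ^ i) • T.basis (i + j) := by
  conv_lhs => rw [← T.basis.linearCombination_repr x, ← T.basis.linearCombination_repr y,
    Finsupp.linearCombination_apply, Finsupp.linearCombination_apply, Finsupp.sum, Finsupp.sum]
  rw [Finset.sum_mul_sum]
  refine Finset.sum_congr rfl fun i _ => Finset.sum_congr rfl fun j _ => ?_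
  simp only [T.basis_eq]
  exact smul_tau_mul T _ _ i j

lemma repr_mul (T : TwistedPolynomialRing q k R) (x y : R) (m : ℕ) :
    T.basis.repr (x * y) m = ∑ i ∈ (T.basis.repr x).support, ∑ j ∈ (T.basis.repr y).support,
      (if i + j = m then T.basis.repr x i * (T.basis.repr y j) ^ q ^ i else 0) := by
  rw [mul_expand T x y, map_sum, Finsupp.finset_sum_apply]
  refine Finset.sum_congr rfl fun i _ => ?_
  rw [map_sum, Finsupp.finset_sum_apply]
  refine Finset.sum_congr rfl fun j _ => ?_
  rw [map_smul, Finsupp.smul_apply, T.basis.repr_self, Finsupp.single_apply, smul_eq_mul]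
  split <;> simp

lemma repr_mul_zero_of_lt (T : TwistedPolynomialRing q k R) (x y : R) {m : ℕ}
    (h : T.degτ x + T.degτ y < m) : T.basis.repr (x * y) m = 0 := by
  rw [repr_mul]
  refine Finset.sum_eq_zero fun i hi => Finset.sum_eq_zero fun j hj => ?_
  have h1 := le_degτ T hi
  have h2 := le_degτ T hj
  rw [if_neg (by omega)]

lemma repr_mul_top (T : TwistedPolynomialRing q k R) {x y : R} (hx : x ≠ 0) (hy : y ≠ 0) :
    T.basis.repr (x * y) (T.degτ x + T.degτ y) =
      T.basis.repr x (T.degτ x) * (T.basis.repr y (T.degτ y)) ^ q ^ T.degτ x := by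
  rw [repr_mul]
  rw [Finset.sum_eq_single (T.degτ x)]
  · rw [Finset.sum_eq_single (T.degτ y)]
    · rw [if_pos rfl]
    · intro j hj hjne
      have := le_degτ T hj
      rw [if_neg (by omega)]
    · intro h; exact absurd (degτ_mem T hy) h
  · intro i hi hine
    refine Finset.sum_eq_zero fun j hj => ?_
    have h1 := le_degτ T hi
    have h2 := le_degτ T hj
    rw [if_neg (by omega)]
  · intro h; exact absurd (degτ_mem T hx) h

lemma mul_ne_zero' (T : TwistedPolynomialRing q k R) {x y : R} (hx : x ≠ 0) (hy : y ≠ 0) :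
    x * y ≠ 0 := by
  intro h
  have h1 := repr_mul_top T hx hy
  rw [h] at h1
  simp only [map_zero, Finsupp.coe_zero, Pi.zero_apply] at h1
  exact (mul_ne_zero (lead_ne_zero T hx) (pow_ne_zero _ (lead_ne_zero T hy))) h1.symm

lemma degτ_mul (T : TwistedPolynomialRing q k R) {x y : R} (hx : x ≠ 0) (hy : y ≠ 0) :
    T.degτ (x * y) = T.degτ x + T.degτ y := by
  apply le_antisymm
  · apply Finset.sup_le
    intro m hm
    by_contra hlt
    simp only [id] at hlt
    exact Finsupp.mem_support_iff.mp hm (repr_mul_zero_of_lt T x y (by omega))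
  · apply le_degτ
    rw [Finsupp.mem_support_iff, repr_mul_top T hx hy]
    exact mul_ne_zero (lead_ne_zero T hx) (pow_ne_zero _ (lead_ne_zero T hy))

/-- Right division with remainder by any nonzero `d`. -/
lemma exists_div (T : TwistedPolynomialRing q k R) (d : R) (hd : d ≠ 0) (f : R) :
    ∃ c e : R, f = c * d + e ∧ (e = 0 ∨ T.degτ e < T.degτ d) := by
  obtain ⟨D, hD⟩ : ∃ D, f = 0 ∨ T.degτ f < D := ⟨T.degτ f + 1, Or.inr (Nat.lt_succ_self _)⟩
  induction D using Nat.strong_induction_on generalizing f with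
  | _ D ih =>
  rcases eq_or_ne f 0 with rfl | hf
  · exact ⟨0, 0, by simp, Or.inl rfl⟩
  have hDf : T.degτ f < D := hD.resolve_left hf
  rcases lt_or_ge (T.degτ f) (T.degτ d) with h | h
  · exact ⟨0, f, by simp, Or.inr h⟩
  have hα0 : T.basis.repr f (T.degτ f) ≠ 0 := lead_ne_zero T hf
  have hβ0 : T.basis.repr d (T.degτ d) ≠ 0 := lead_ne_zero T hd
  have hγ0 : T.basis.repr f (T.degτ f) *
      ((T.basis.repr d (T.degτ d)) ^ q ^ (T.degτ f - T.degτ d))⁻¹ ≠ 0 :=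
    mul_ne_zero hα0 (inv_ne_zero (pow_ne_zero _ hβ0))
  set γ : k := T.basis.repr f (T.degτ f) *
      ((T.basis.repr d (T.degτ d)) ^ q ^ (T.degτ f - T.degτ d))⁻¹ with hγdef
  have hc₀repr : T.basis.repr (γ • T.basis (T.degτ f - T.degτ d)) =
      Finsupp.single (T.degτ f - T.degτ d) γ := by
    rw [map_smul, T.basis.repr_self, Finsupp.smul_single, smul_eq_mul, mul_one]
  have hc₀ne : γ • T.basis (T.degτ f - T.degτ d) ≠ 0 := by
    intro h0
    apply hγ0
    rw [h0, map_zero] at hc₀repr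
    simpa using (congrFun (congrArg (⇑) hc₀repr.symm) (T.degτ f - T.degτ d))
  have hc₀deg : T.degτ (γ • T.basis (T.degτ f - T.degτ d)) = T.degτ f - T.degτ d := by
    rw [TwistedPolynomialRing.degτ, hc₀repr, Finsupp.support_single_ne_zero _ hγ0,
      Finset.sup_singleton]
    rfl
  have key : ∀ m, T.degτ f ≤ m →
      T.basis.repr (f - (γ • T.basis (T.degτ f - T.degτ d)) * d) m = 0 := by
    intro m hm
    rw [map_sub, Finsupp.sub_apply]
    rcases eq_or_lt_of_le hm with heq | hlt
    · have htop := repr_mul_top T hc₀ne hd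
      rw [hc₀deg, Nat.sub_add_cancel h] at htop
      have hat : T.basis.repr (γ • T.basis (T.degτ f - T.degτ d)) (T.degτ f - T.degτ d) = γ := by
        rw [hc₀repr, Finsupp.single_apply, if_pos rfl]
      rw [hat] at htop
      rw [← heq, htop, hγdef, mul_assoc, inv_mul_cancel₀ (pow_ne_zero _ hβ0), mul_one, sub_self]
    · rw [repr_eq_zero_of_lt T hlt, repr_mul_zero_of_lt T _ _ (by rw [hc₀deg]; omega), sub_zero]
  have hlow := (below_iff T (T.degτ f) _).mpr key
  rcases hlow with h0 | hlow
  · exact ⟨γ • T.basis (T.degτ f - T.degτ d), 0,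
      by rw [add_zero]; exact sub_eq_zero.mp h0, Or.inl rfl⟩
  · obtain ⟨c, e, hce, he⟩ := ih (T.degτ f) hDf _ (Or.inr hlow)
    refine ⟨γ • T.basis (T.degτ f - T.degτ d) + c, e, ?_, he⟩
    rw [sub_eq_iff_eq_add] at hce
    refine hce.trans ?_
    noncomm_ring

lemma smul_mul (T : TwistedPolynomialRing q k R) (a : k) (x y : R) :
    (a • x) * y = a • (x * y) := by
  rw [T.smul_def, T.smul_def, mul_assoc]

/-- A constant-degree element is a scalar multiple of 1. -/
lemma eq_smul_one_of_degτ_zero (T : TwistedPolynomialRing q k R) {d : R} (hd : T.degτ d = 0) :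
    d = (T.basis.repr d 0) • (1 : R) := by
  have h1 : (1 : R) = T.basis 0 := by rw [T.basis_eq, pow_zero]
  apply T.basis.repr.injective
  rw [h1, map_smul, T.basis.repr_self, Finsupp.smul_single, smul_eq_mul, mul_one]
  ext m
  rcases Nat.eq_zero_or_pos m with rfl | hm
  · simp
  · rw [Finsupp.single_apply, if_neg (by omega), repr_eq_zero_of_lt T (by omega)]

/-- Multiples of `P` of degree `< s` vanish. -/
lemma multiple_eq_zero (T : TwistedPolynomialRing q k R) {s : ℕ} (P : R) (hP0 : P ≠ 0)
    (hPdeg : T.degτ P = s) {x : R} (hx : ∃ g : R, x = g * P)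
    (hb : x = 0 ∨ T.degτ x < s) : x = 0 := by
  obtain ⟨g, rfl⟩ := hx
  rcases eq_or_ne g 0 with rfl | hg
  · rw [zero_mul]
  rcases hb with h0 | hlt
  · exact h0
  · rw [degτ_mul T hg hP0, hPdeg] at hlt
    omega

/-- Bezout: if `b ≠ 0` has degree `< s` and `P` is irreducible, then `1 ∈ Rb + RP`. -/
lemma bezout (T : TwistedPolynomialRing q k R) {s : ℕ} (P : R) (hP0 : P ≠ 0)
    (hPdeg : T.degτ P = s)
    (hPirr : ¬ ∃ f g : R, T.degτ f < s ∧ T.degτ g < s ∧ P = f * g)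
    {b : R} (hb0 : b ≠ 0) (hbs : T.degτ b < s) :
    ∃ x y : R, 1 = x * b + y * P := by
  set I : Set ℕ := {m | ∃ f : R, (∃ x y : R, f = x * b + y * P) ∧ f ≠ 0 ∧ T.degτ f = m} with hI
  have hbI : T.degτ b ∈ I := ⟨b, ⟨1, 0, by simp⟩, hb0, rfl⟩
  obtain ⟨d, ⟨x₀, y₀, hdxy⟩, hd0, hddeg⟩ := Nat.sInf_mem (s := I) ⟨_, hbI⟩
  have hdmin : ∀ f : R, (∃ x y : R, f = x * b + y * P) → f ≠ 0 → sInf I ≤ T.degτ f :=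
    fun f hf hf0 => Nat.sInf_le ⟨f, hf, hf0, rfl⟩
  obtain ⟨c, e, hce, he⟩ := exists_div T d hd0 P
  have he0 : e = 0 := by
    by_contra he0
    have heI : ∃ x y : R, e = x * b + y * P := by
      refine ⟨-(c * x₀), 1 - c * y₀, ?_⟩
      have hesub : e = P - c * d := eq_sub_of_add_eq' hce.symm
      rw [hesub, hdxy]
      noncomm_ring
    have hge := hdmin e heI he0
    have hlt := he.resolve_left he0
    rw [hddeg] at hlt
    omega
  rw [he0, add_zero] at hce
  have hc0 : c ≠ 0 := by rintro rfl; rw [zero_mul] at hce; exact hP0 hce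
  have hdegsum : T.degτ c + T.degτ d = s := by
    rw [← hPdeg, hce, degτ_mul T hc0 hd0]
  have hdb : T.degτ d ≤ T.degτ b :=
    le_trans (le_of_eq hddeg) (hdmin b ⟨1, 0, by simp⟩ hb0)
  have hdd : T.degτ d = 0 := by
    by_contra hdd
    exact hPirr ⟨c, d, by omega, by omega, hce⟩
  set γ : k := T.basis.repr d 0 with hγ
  have hdγ : d = γ • (1 : R) := eq_smul_one_of_degτ_zero T hdd
  have hγ0 : γ ≠ 0 := by
    intro h0
    rw [h0, zero_smul] at hdγ
    exact hd0 hdγ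
  refine ⟨γ⁻¹ • x₀, γ⁻¹ • y₀, ?_⟩
  rw [smul_mul T, smul_mul T, ← smul_add, ← hdxy, hdγ, smul_smul, inv_mul_cancel₀ hγ0, one_smul]

/-- The set of elements of degree `< N` is equivalent to `Fin N → k`. -/
noncomputable def belowEquiv (T : TwistedPolynomialRing q k R) (N : ℕ) :
    {f : R | f = 0 ∨ T.degτ f < N} ≃ (Fin N → k) where
  toFun f i := T.basis.repr f.1 i.1
  invFun c := ⟨T.basis.repr.symm (∑ i : Fin N, Finsupp.single i.1 (c i)), by
    rw [Set.mem_setOf_eq, below_iff T]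
    intro m hm
    rw [LinearEquiv.apply_symm_apply, Finsupp.finset_sum_apply]
    refine Finset.sum_eq_zero fun i _ => ?_
    rw [Finsupp.single_apply, if_neg (by omega)]⟩
  left_inv f := by
    have hf := (below_iff T N f.1).mp f.2
    have hrepr : (∑ i : Fin N, Finsupp.single i.1 (T.basis.repr f.1 i.1)) = T.basis.repr f.1 := by
      ext m
      rw [Finsupp.finset_sum_apply]
      rcases lt_or_ge m N with hm | hm
      · rw [Finset.sum_eq_single (⟨m, hm⟩ : Fin N)]
        · simp
        · intro j _ hj
          rw [Finsupp.single_apply, if_neg (fun hc => hj (Fin.val_injective hc))]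
        · intro hc; exact absurd (Finset.mem_univ _) hc
      · rw [hf m hm]
        refine Finset.sum_eq_zero fun i _ => ?_
        rw [Finsupp.single_apply, if_neg (by omega)]
    apply Subtype.ext
    show T.basis.repr.symm (∑ i : Fin N, Finsupp.single i.1 (T.basis.repr f.1 i.1)) = f.1
    rw [hrepr, LinearEquiv.symm_apply_apply]
  right_inv c := by
    funext i
    simp only [LinearEquiv.apply_symm_apply, Finsupp.finset_sum_apply]
    rw [Finset.sum_eq_single i]
    · simp
    · intro j _ hj
      rw [Finsupp.single_apply, if_neg (fun hc => hj (Fin.val_injective hc))]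
    · intro hc; exact absurd (Finset.mem_univ _) hc

lemma card_below [Fintype k] (T : TwistedPolynomialRing q k R) (N : ℕ) :
    Nat.card {f : R | f = 0 ∨ T.degτ f < N} = Fintype.card k ^ N := by
  rw [Nat.card_congr (belowEquiv T N)]
  simp [Nat.card_eq_fintype_card]

lemma finite_below [Fintype k] (T : TwistedPolynomialRing q k R) (N : ℕ) :
    Finite {f : R | f = 0 ∨ T.degτ f < N} :=
  Finite.of_equiv _ (belowEquiv T N).symm

end TwistedAux

open TwistedAux in
theorem twisted_quotient_is_semifield
    {n s : ℕ} (hn : 0 < n) (hs : 0 < s)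
    {F : Type} [Field F] [Fintype F] (hq : Fintype.card F = q)
    [Fintype k] (hk : Fintype.card k = q ^ n)
    (T : TwistedPolynomialRing q k R)
    (P : R) (hP0 : P ≠ 0)
    (hPdeg : T.degτ P = s)
    (hPmonic : T.basis.repr P s = 1)
    (hPirr : ¬ ∃ f g : R, T.degτ f < s ∧ T.degτ g < s ∧ P = f * g)
    (modr : R → R)
    (hmod : ∀ f : R, ∃ g : R, f = g * P + modr f)
    (hmods : ∀ f : R, modr f = 0 ∨ T.degτ (modr f) < s) :
    (1 : R) ∈ {f : R | f = 0 ∨ T.degτ f < s} ∧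
    (∀ f g : R, modr (f + g) = modr f + modr g) ∧
    (∀ b ∈ {f : R | f = 0 ∨ T.degτ f < s}, modr (1 * b) = b ∧ modr (b * 1) = b) ∧
    (∀ a ∈ {f : R | f = 0 ∨ T.degτ f < s}, ∀ b ∈ {f : R | f = 0 ∨ T.degτ f < s},
      modr (a * b) ∈ {f : R | f = 0 ∨ T.degτ f < s}) ∧
    (∀ a ∈ {f : R | f = 0 ∨ T.degτ f < s}, ∀ b ∈ {f : R | f = 0 ∨ T.degτ f < s},
      a ≠ 0 → b ≠ 0 → modr (a * b) ≠ 0) ∧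
    Nat.card {f : R | f = 0 ∨ T.degτ f < s} = q ^ (n * s) := by
  have hQ1 : 1 < Fintype.card k := Fintype.one_lt_card
  -- `modr` fixes elements of `S`
  have hfix : ∀ f : R, (f = 0 ∨ T.degτ f < s) → modr f = f := by
    intro f hf
    obtain ⟨g, hg⟩ := hmod f
    have hsub : f - modr f = g * P := by
      nth_rewrite 1 [hg]
      exact add_sub_cancel_right _ _
    have hbel : f - modr f = 0 ∨ T.degτ (f - modr f) < s := by
      rw [below_iff T]
      intro m hm
      rw [map_sub, Finsupp.sub_apply, (below_iff T s f).mp hf m hm,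
        (below_iff T s (modr f)).mp (hmods f) m hm, sub_zero]
    have h0 := multiple_eq_zero T P hP0 hPdeg ⟨g, hsub⟩ hbel
    have := sub_eq_zero.mp h0
    exact this.symm
  refine ⟨?_, ?_, ?_, ?_, ?_, ?_⟩
  · -- 1 ∈ S
    rw [Set.mem_setOf_eq, below_iff T]
    intro m hm
    have h1 : (1 : R) = T.basis 0 := by rw [T.basis_eq, pow_zero]
    rw [h1, T.basis.repr_self, Finsupp.single_apply, if_neg (by omega)]
  · -- additivity of modr
    intro f g
    obtain ⟨a₁, h1⟩ := hmod (f + g)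
    obtain ⟨a₂, h2⟩ := hmod f
    obtain ⟨a₃, h3⟩ := hmod g
    have e1 : modr (f + g) = (f + g) - a₁ * P := eq_sub_of_add_eq' h1.symm
    have e2 : modr f = f - a₂ * P := eq_sub_of_add_eq' h2.symm
    have e3 : modr g = g - a₃ * P := eq_sub_of_add_eq' h3.symm
    have hsub : modr (f + g) - modr f - modr g = (a₂ + a₃ - a₁) * P := by
      rw [e1, e2, e3]; noncomm_ring
    have hbel : modr (f + g) - modr f - modr g = 0 ∨
        T.degτ (modr (f + g) - modr f - modr g) < s := by
      rw [below_iff T]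
      intro m hm
      rw [map_sub, map_sub, Finsupp.sub_apply, Finsupp.sub_apply,
        (below_iff T s _).mp (hmods (f + g)) m hm, (below_iff T s _).mp (hmods f) m hm,
        (below_iff T s _).mp (hmods g) m hm, sub_zero, sub_zero]
    have h0 := multiple_eq_zero T P hP0 hPdeg ⟨_, hsub⟩ hbel
    rw [sub_sub] at h0
    exact sub_eq_zero.mp h0
  · -- unity
    intro b hb
    exact ⟨by rw [one_mul]; exact hfix b hb, by rw [mul_one]; exact hfix b hb⟩
  · -- closure
    intro a _ b _
    exact hmods (a * b)
  · -- no zero divisors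
    intro a ha b hb ha0 hb0 hzero
    obtain ⟨g, hg⟩ := hmod (a * b)
    rw [hzero, add_zero] at hg
    have hda : T.degτ a < s := (ha : a = 0 ∨ T.degτ a < s).resolve_left ha0
    have hdb : T.degτ b < s := (hb : b = 0 ∨ T.degτ b < s).resolve_left hb0
    obtain ⟨x, y, hxy⟩ := bezout T P hP0 hPdeg hPirr hb0 hdb
    haveI : Finite {f : R | f = 0 ∨ T.degτ f < T.degτ a} := finite_below T _
    haveI : Finite {f : R | f = 0 ∨ T.degτ f < T.degτ b} := finite_below T _
    -- the image of the surjection lands in degrees `< s + deg b`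
    have hmem : ∀ (e v : R), (e = 0 ∨ T.degτ e < T.degτ a) → (v = 0 ∨ T.degτ v < T.degτ b) →
        (e * b + v * P = 0 ∨ T.degτ (e * b + v * P) < s + T.degτ b) := by
      intro e v he hv
      rw [below_iff T]
      intro m hm
      rw [map_add, Finsupp.add_apply]
      have h1 : T.basis.repr (e * b) m = 0 := by
        rcases eq_or_ne e 0 with rfl | he0
        · simp
        · apply repr_eq_zero_of_lt T
          have := he.resolve_left he0
          rw [degτ_mul T he0 hb0]
          omega
      have h2 : T.basis.repr (v * P) m = 0 := by
        rcases eq_or_ne v 0 with rfl | hv0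
        · simp
        · apply repr_eq_zero_of_lt T
          have := hv.resolve_left hv0
          rw [degτ_mul T hv0 hP0, hPdeg]
          omega
      rw [h1, h2, add_zero]
    -- surjectivity
    have hsurj : ∀ f : R, (f = 0 ∨ T.degτ f < s + T.degτ b) →
        ∃ e v : R, (e = 0 ∨ T.degτ e < T.degτ a) ∧ (v = 0 ∨ T.degτ v < T.degτ b) ∧
          f = e * b + v * P := by
      intro f hf
      obtain ⟨c, e, hce, he⟩ := exists_div T a ha0 (f * x)
      have hid : f = e * b + (c * g + f * y) * P := by
        calc f = f * 1 := (mul_one f).symm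
          _ = f * (x * b + y * P) := by rw [← hxy]
          _ = (f * x) * b + (f * y) * P := by noncomm_ring
          _ = (c * a + e) * b + (f * y) * P := by rw [hce]
          _ = c * (a * b) + (e * b + (f * y) * P) := by noncomm_ring
          _ = c * (g * P) + (e * b + (f * y) * P) := by rw [hg]
          _ = e * b + (c * g + f * y) * P := by noncomm_ring
      refine ⟨e, c * g + f * y, he, ?_, hid⟩
      rcases eq_or_ne (c * g + f * y) 0 with hv0 | hv0
      · exact Or.inl hv0
      · right
        have hvP : (c * g + f * y) * P = f - e * b := eq_sub_of_add_eq' hid.symm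
        have hbelvP : (c * g + f * y) * P = 0 ∨ T.degτ ((c * g + f * y) * P) < s + T.degτ b := by
          rw [below_iff T]
          intro m hm
          rw [hvP, map_sub, Finsupp.sub_apply, (below_iff T _ f).mp hf m hm]
          have h1 : T.basis.repr (e * b) m = 0 := by
            rcases eq_or_ne e 0 with rfl | he0
            · simp
            · apply repr_eq_zero_of_lt T
              have := he.resolve_left he0
              rw [degτ_mul T he0 hb0]
              omega
          rw [h1, sub_zero]
        have hne := mul_ne_zero' T hv0 hP0
        have hlt := hbelvP.resolve_left hne
        rw [degτ_mul T hv0 hP0, hPdeg] at hlt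
        omega
    -- cardinality contradiction
    have hcard : Nat.card {f : R | f = 0 ∨ T.degτ f < s + T.degτ b} ≤
        Nat.card ({f : R | f = 0 ∨ T.degτ f < T.degτ a} ×
          {f : R | f = 0 ∨ T.degτ f < T.degτ b}) := by
      apply Nat.card_le_card_of_surjective
        (f := fun p : {f : R | f = 0 ∨ T.degτ f < T.degτ a} ×
            {f : R | f = 0 ∨ T.degτ f < T.degτ b} =>
          (⟨p.1.1 * b + p.2.1 * P, hmem p.1.1 p.2.1 p.1.2 p.2.2⟩ :
            {f : R | f = 0 ∨ T.degτ f < s + T.degτ b}))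
      rintro ⟨f, hf⟩
      obtain ⟨e, v, he, hv, hid⟩ := hsurj f hf
      exact ⟨⟨⟨e, he⟩, ⟨v, hv⟩⟩, Subtype.ext hid.symm⟩
    rw [Nat.card_prod, card_below T, card_below T, card_below T, ← pow_add] at hcard
    have := (Nat.pow_le_pow_iff_right hQ1).mp hcard
    omega
  · -- cardinality
    rw [card_below T s, hk, ← pow_mul]
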